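/- Let S be the monoid ℕ ⊔ (0, ∞] (the Cuntz semigroup of the Jiang–Su algebra): elements are either 'compact' naturals n ∈ ℕ or 'soft' reals t ∈ (0, ∞], with addition extending addition of reals (a compact n plus a soft t is the soft n + t), and order given by the order of the underlying extended reals except that a nonzero soft t dominates a compact n only if n ≤ t, while a compact n dominates a soft t iff t ≤ n. Then S fails Riesz decomposition: for a = compact 1, b = c = soft 2/3, we have a ≤ b + c, but there exist no a₁, a₂ ∈ S with a = a₁ + a₂, a₁ ≤ b, and a₂ ≤ c. -/

import Mathlib

open scoped ENNReal

/-- The Cuntz semigroup of the Jiang–Su algebra, modeled as `ℕ ⊔ (0, ∞]`: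
compact elements are naturals, soft elements are positive extended reals. -/
def JS : Type := ℕ ⊕ {t : ℝ≥0∞ // 0 < t}

namespace JS

/-- Addition: sums of compacts are compact; any sum involving a nonzero soft
element is soft, with added values. -/
noncomputable def add : JS → JS → JS
  | .inl m, .inl n => .inl (m + n)
  | .inl n, .inr t => .inr ⟨(n : ℝ≥0∞) + t.1, lt_of_lt_of_le t.2 le_add_self⟩
  | .inr t, .inl n => .inr ⟨t.1 + (n : ℝ≥0∞), lt_of_lt_of_le t.2 le_self_add⟩
  | .inr s, .inr t => .inr ⟨s.1 + t.1, lt_of_lt_of_le s.2 le_self_add⟩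

/-- The order: compare the underlying extended real values. -/
def le : JS → JS → Prop
  | .inl m, .inl n => m ≤ n
  | .inl n, .inr t => (n : ℝ≥0∞) ≤ t.1
  | .inr t, .inl n => t.1 ≤ (n : ℝ≥0∞)
  | .inr s, .inr t => s.1 ≤ t.1

end JS

/-- The Cuntz semigroup `ℕ ⊔ (0, ∞]` of the Jiang–Su algebra
fails Riesz decomposition: for `a` the compact `1` and `b = c` the soft `2/3`,
one has `a ≤ b + c` but there is no decomposition `a = a₁ + a₂` with
`a₁ ≤ b` and `a₂ ≤ c`. -/
theorem JS_fails_riesz_decomposition :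
    ∀ hb : (0 : ℝ≥0∞) < 2/3,
    JS.le (Sum.inl 1) (JS.add (Sum.inr ⟨2/3, hb⟩) (Sum.inr ⟨2/3, hb⟩)) ∧
    ¬ ∃ a₁ a₂ : JS, Sum.inl 1 = JS.add a₁ a₂ ∧
        JS.le a₁ (Sum.inr ⟨2/3, hb⟩) ∧ JS.le a₂ (Sum.inr ⟨2/3, hb⟩) := by
  intro hb
  constructor
  · simp only [JS.add, JS.le]
    show ((1:ℕ) : ℝ≥0∞) ≤ 2/3 + 2/3
    rw [Nat.cast_one]
    rw [ENNReal.div_add_div_same]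
    rw [ENNReal.le_div_iff_mul_le (by norm_num) (by norm_num)]
    norm_num
  · rintro ⟨a₁, a₂, heq, h1, h2⟩
    have h23 : ¬ ((1 : ℝ≥0∞) ≤ 2/3) := by
      rw [ENNReal.le_div_iff_mul_le (by norm_num) (by norm_num)]
      norm_num
    rcases a₁ with m | t <;> rcases a₂ with n | t'
    · simp only [JS.add] at heq
      have : m + n = 1 := (Sum.inl.injEq _ _).mp heq |>.symm
      have hcase : (m = 0 ∧ n = 1) ∨ (m = 1 ∧ n = 0) := by omega
      rcases hcase with ⟨hm, hn⟩ | ⟨hm, hn⟩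
      · subst hn
        have := h2
        simp only [JS.le, Nat.cast_one] at this
        exact h23 this
      · subst hm
        have := h1
        simp only [JS.le, Nat.cast_one] at this
        exact h23 this
    · cases heq
    · cases heq
    · cases heq
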